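/- Let E be a real inner product space, X ⊆ E a nonempty convex set, d : E → ℝ a convex Fréchet-differentiable function with Bregman divergence V(y,x) := d(y) − d(x) − ⟨∇d(x), y − x⟩, μ > 0, and g : E → E a μ-relatively strongly monotone operator on X with z* ∈ X a solution of the Minty variational inequality. Let L > 0, δ ≥ 0, and z, w, z⁺ ∈ X be such that: (i) w minimizes y ↦ ⟨(1/L)·g(z), y⟩ + V(y, z) over X; (ii) z⁺ minimizes u ↦ ⟨(1/L)·g(w), u⟩ + V(u, z) + (μ/L)·V(u, w) over X; (iii) ⟨g(z) − g(w), z⁺ − w⟩ ≤ L·( V(w, z) + V(z⁺, w) ) + δ. Then V(z*, z⁺) ≤ (1 + μ/L)^{−1}·V(z*, z) + δ/(L + μ). -/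

import Mathlib

open scoped RealInnerProductSpace
open InnerProductSpace Topology

section Helpers
open InnerProductSpace Topology

variable {E : Type*} [NormedAddCommGroup E] [InnerProductSpace ℝ E] [CompleteSpace E]

lemma line_deriv {f : E → ℝ} {a x : E} (hf : HasGradientAt f a x) (v : E) :
    HasDerivAt (fun t : ℝ => f (x + t • v)) ⟪a, v⟫ 0 := by
  have h1 : HasDerivAt (fun t : ℝ => x + t • v) v 0 := by
    simpa using ((hasDerivAt_id (0:ℝ)).smul_const v).const_add x
  have h2 : HasFDerivAt f (toDual ℝ E a) (x + (0:ℝ) • v) := by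
    simpa using hf.hasFDerivAt
  have := h2.comp_hasDerivAt 0 h1
  simp at this
  exact this

lemma deriv_le_of_slope {f : E → ℝ} {a x : E} (hf : HasGradientAt f a x) (v : E) (c : ℝ)
    (h : ∀ t : ℝ, t ∈ Set.Ioo (0:ℝ) 1 → f (x + t • v) - f x ≤ t * c) : ⟪a, v⟫ ≤ c := by
  have hslope : Filter.Tendsto (slope (fun t : ℝ => f (x + t • v)) 0) (𝓝[≠] 0)
      (𝓝 ⟪a, v⟫) := (hasDerivAt_iff_tendsto_slope).1 (line_deriv hf v)
  have hmono : 𝓝[Set.Ioi (0:ℝ)] 0 ≤ 𝓝[≠] (0:ℝ) :=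
    nhdsWithin_mono 0 (fun t ht => ne_of_gt ht)
  refine le_of_tendsto (hslope.mono_left hmono) ?_
  filter_upwards [Ioo_mem_nhdsGT zero_lt_one] with t ht
  have ht0 : 0 < t := ht.1
  have := h t ht
  rw [slope_def_field]
  simp only [sub_zero]
  rw [div_le_iff₀ ht0]
  simp only [zero_smul, add_zero]
  linarith [mul_comm c t]

lemma le_deriv_of_slope {f : E → ℝ} {a x : E} (hf : HasGradientAt f a x) (v : E) (c : ℝ)
    (h : ∀ t : ℝ, t ∈ Set.Ioo (0:ℝ) 1 → t * c ≤ f (x + t • v) - f x) : c ≤ ⟪a, v⟫ := by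
  have hslope : Filter.Tendsto (slope (fun t : ℝ => f (x + t • v)) 0) (𝓝[≠] 0)
      (𝓝 ⟪a, v⟫) := (hasDerivAt_iff_tendsto_slope).1 (line_deriv hf v)
  have hmono : 𝓝[Set.Ioi (0:ℝ)] 0 ≤ 𝓝[≠] (0:ℝ) :=
    nhdsWithin_mono 0 (fun t ht => ne_of_gt ht)
  refine ge_of_tendsto (hslope.mono_left hmono) ?_
  filter_upwards [Ioo_mem_nhdsGT zero_lt_one] with t ht
  have ht0 : 0 < t := ht.1
  have := h t ht
  rw [slope_def_field]
  simp only [sub_zero]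
  rw [le_div_iff₀ ht0]
  simp only [zero_smul, add_zero]
  linarith [mul_comm c t]

/-- Gradient inequality for convex functions. -/
lemma grad_ineq {f : E → ℝ} (hconv : ConvexOn ℝ Set.univ f) {a x : E}
    (hf : HasGradientAt f a x) (y : E) : f x + ⟪a, y - x⟫ ≤ f y := by
  have := deriv_le_of_slope hf (y - x) (f y - f x) (fun t ht => ?_)
  · linarith
  · have hc := hconv.2 (Set.mem_univ x) (Set.mem_univ y) (by linarith [ht.1, ht.2] : (0:ℝ) ≤ 1 - t)
      (le_of_lt ht.1) (by ring)
    have he : x + t • (y - x) = (1 - t) • x + t • y := by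
      rw [smul_sub, sub_smul]; module
    rw [he]
    have := hc
    simp only [smul_eq_mul] at this
    nlinarith

/-- First-order optimality on a convex set. -/
lemma opt_cond {f : E → ℝ} {a w : E} (hf : HasGradientAt f a w)
    {X : Set E} (hXconv : Convex ℝ X) (hw : w ∈ X)
    (hmin : ∀ y ∈ X, f w ≤ f y) {y : E} (hy : y ∈ X) : 0 ≤ ⟪a, y - w⟫ := by
  refine le_deriv_of_slope hf (y - w) 0 (fun t ht => ?_)
  have hmem : w + t • (y - w) ∈ X := by
    have : (1 - t) • w + t • y ∈ X :=
      hXconv hw hy (by linarith [ht.1, ht.2]) (le_of_lt ht.1) (by ring)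
    have he : w + t • (y - w) = (1 - t) • w + t • y := by
      rw [smul_sub, sub_smul]; module
    rwa [he]
  have := hmin _ hmem
  simpa using this

lemma grad_aux {d : E → ℝ} {a x0 : E} (hd : HasGradientAt d a x0) (b : E) (cd : ℝ) :
    HasGradientAt (fun y => ⟪b, y⟫ + cd * d y) (b + cd • a) x0 := by
  rw [hasGradientAt_iff_hasFDerivAt]
  have h1 : HasFDerivAt (fun y : E => ⟪b, y⟫) (toDual ℝ E b) x0 :=
    (toDual ℝ E b).hasFDerivAt
  have h2 := hd.hasFDerivAt.const_mul cd
  have h3 := h1.add h2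
  refine h3.congr_fderiv ?_
  ext v
  simp [inner_add_left, real_inner_smul_left]

lemma minty_bound {X : Set E} (hXconv : Convex ℝ X)
    {d : E → ℝ} {Dd : E → E} (hd : ∀ x, HasGradientAt d (Dd x) x)
    {V : E → E → ℝ} (hV : ∀ y x, V y x = d y - d x - ⟪Dd x, y - x⟫)
    {μ : ℝ} (hμ : 0 < μ) {g : E → E}
    (hmono : ∀ x ∈ X, ∀ y ∈ X, μ * (V y x + V x y) ≤ ⟪g y - g x, y - x⟫)
    {zs : E} (hzs : zs ∈ X) (hMinty : ∀ x ∈ X, ⟪g x, zs - x⟫ ≤ 0)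
    (hVnn : ∀ p q : E, 0 ≤ V p q)
    {w : E} (hw : w ∈ X) : μ * V zs w ≤ ⟪g w, w - zs⟫ := by
  set c : ℝ := ⟪g w, w - zs⟫ with hc
  set φ : ℝ → ℝ := fun t =>
    (1 - t) * c - μ * (d (zs + t • (w - zs)) - d w - ⟪Dd w, zs + t • (w - zs) - w⟫) with hφ
  have hcont : ContinuousAt φ 0 := by
    have hline : Continuous (fun t : ℝ => zs + t • (w - zs)) := by continuity
    have hdc : ContinuousAt d (zs + (0:ℝ) • (w - zs)) := by
      simpa using (hd zs).hasFDerivAt.differentiableAt.continuousAt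
    have h1 : ContinuousAt (fun t : ℝ => d (zs + t • (w - zs))) 0 :=
      ContinuousAt.comp (g := d) (f := fun t : ℝ => zs + t • (w - zs)) hdc hline.continuousAt
    have h2 : Continuous (fun t : ℝ => ⟪Dd w, zs + t • (w - zs) - w⟫) := by
      have : Continuous (fun t : ℝ => zs + t • (w - zs) - w) := by continuity
      exact Continuous.inner continuous_const this
    exact (((continuous_const.sub continuous_id).mul continuous_const).continuousAt).sub
      (continuousAt_const.mul ((h1.sub continuousAt_const).sub h2.continuousAt))
  have key : ∀ t ∈ Set.Ioo (0:ℝ) 1, 0 ≤ φ t := by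
    intro t ht
    set xt : E := zs + t • (w - zs) with hxt
    have hxtX : xt ∈ X := by
      have h := hXconv hzs hw (by linarith [ht.1, ht.2] : (0:ℝ) ≤ 1 - t)
        (le_of_lt ht.1) (by ring)
      have he : xt = (1 - t) • zs + t • w := by rw [hxt]; module
      rwa [he]
    have hM := hMinty xt hxtX
    have he1 : zs - xt = (-t) • (w - zs) := by rw [hxt]; module
    rw [he1, real_inner_smul_right] at hM
    have hpos : 0 ≤ ⟪g xt, w - zs⟫ := by nlinarith [ht.1]
    have hmo := hmono xt hxtX w hw
    have he2 : w - xt = (1 - t) • (w - zs) := by rw [hxt]; module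
    rw [he2, real_inner_smul_right, inner_sub_left] at hmo
    have h1t : (0:ℝ) ≤ 1 - t := by linarith [ht.2]
    have hub : μ * (V w xt + V xt w) ≤ (1 - t) * c := by
      rw [hc]
      nlinarith
    have hVw : 0 ≤ V w xt := hVnn w xt
    have hVxt : V xt w = d xt - d w - ⟪Dd w, xt - w⟫ := hV xt w
    rw [hφ]
    dsimp only
    rw [← hxt, ← hVxt]
    nlinarith [hVnn xt w]
  have htend : Filter.Tendsto φ (𝓝[Set.Ioi (0:ℝ)] 0) (𝓝 (φ 0)) :=
    hcont.tendsto.mono_left nhdsWithin_le_nhds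
  have h0 : 0 ≤ φ 0 := by
    refine ge_of_tendsto htend ?_
    filter_upwards [Ioo_mem_nhdsGT zero_lt_one] with t ht
    exact key t ht
  have hφ0 : φ 0 = c - μ * V zs w := by
    rw [hφ]; simp [hV]
  linarith [h0, hφ0.symm.le, hφ0.le]

end Helpers

/-- One-step contraction of Algorithm 3 (proof of Theorem 3): single iteration
with line-search slack δ. -/
theorem algorithm3_one_step_contraction
    {E : Type*} [NormedAddCommGroup E] [InnerProductSpace ℝ E] [CompleteSpace E]
    (X : Set E) (hXne : X.Nonempty) (hXconv : Convex ℝ X)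
    (d : E → ℝ) (hdconv : ConvexOn ℝ Set.univ d)
    (Dd : E → E) (hd : ∀ x, HasGradientAt d (Dd x) x)
    (V : E → E → ℝ) (hV : ∀ y x, V y x = d y - d x - ⟪Dd x, y - x⟫)
    (μ : ℝ) (hμ : 0 < μ) (g : E → E)
    (hmono : ∀ x ∈ X, ∀ y ∈ X, μ * (V y x + V x y) ≤ ⟪g y - g x, y - x⟫)
    (zs : E) (hzs : zs ∈ X) (hMinty : ∀ x ∈ X, ⟪g x, zs - x⟫ ≤ 0)
    (L δ : ℝ) (hL : 0 < L) (hδ : 0 ≤ δ)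
    (z w zp : E) (hzX : z ∈ X) (hwX : w ∈ X) (hzpX : zp ∈ X)
    (hwmin : ∀ y ∈ X,
      (1 / L) * ⟪g z, w⟫ + V w z ≤ (1 / L) * ⟪g z, y⟫ + V y z)
    (hzpmin : ∀ u ∈ X,
      (1 / L) * ⟪g w, zp⟫ + V zp z + (μ / L) * V zp w ≤
        (1 / L) * ⟪g w, u⟫ + V u z + (μ / L) * V u w)
    (hls : ⟪g z - g w, zp - w⟫ ≤ L * (V w z + V zp w) + δ) :
    V zs zp ≤ (1 + μ / L)⁻¹ * V zs z + δ / (L + μ) := by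
  have hVnn : ∀ p q : E, 0 ≤ V p q := fun p q => by
    have := grad_ineq hdconv (hd q) p
    rw [hV]; linarith
  have tp : ∀ p q r : E, ⟪Dd q - Dd r, p - q⟫ = V p r - V q r - V p q := by
    intro p q r
    simp only [hV, inner_sub_left, inner_sub_right]
    ring
  -- optimality of w
  set b1 : E := (1 / L) • g z - Dd z with hb1
  have hf1min : ∀ y ∈ X, ⟪b1, w⟫ + 1 * d w ≤ ⟪b1, y⟫ + 1 * d y := by
    intro y hy
    have h := hwmin y hy
    simp only [hV, inner_sub_right] at h
    simp only [hb1, inner_sub_left, real_inner_smul_left, one_mul]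
    linarith
  have hA := opt_cond (grad_aux (hd w) b1 1) hXconv hwX hf1min hzpX
  simp only [hb1, one_smul, inner_add_left, inner_sub_left, real_inner_smul_left] at hA
  have hA' : 0 ≤ (1 / L) * ⟪g z, zp - w⟫ + (V zp z - V w z - V zp w) := by
    have h3 := tp zp w z
    rw [inner_sub_left] at h3
    linarith
  have hA2 : 0 ≤ ⟪g z, zp - w⟫ + L * (V zp z - V w z - V zp w) := by
    have h := mul_nonneg hL.le hA'
    have e : L * ((1 / L) * ⟪g z, zp - w⟫ + (V zp z - V w z - V zp w)) =
        ⟪g z, zp - w⟫ + L * (V zp z - V w z - V zp w) := by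
      field_simp
    rw [e] at h
    exact h
  -- optimality of zp
  set b2 : E := (1 / L) • g w - Dd z - (μ / L) • Dd w with hb2
  have hf2min : ∀ u ∈ X, ⟪b2, zp⟫ + (1 + μ / L) * d zp ≤ ⟪b2, u⟫ + (1 + μ / L) * d u := by
    intro u hu
    have h := hzpmin u hu
    simp only [hV, inner_sub_right] at h
    simp only [hb2, inner_sub_left, real_inner_smul_left]
    ring_nf
    ring_nf at h
    linarith
  have hB := opt_cond (grad_aux (hd zp) b2 (1 + μ / L)) hXconv hzpX hf2min hzs
  simp only [hb2, inner_add_left, inner_sub_left, real_inner_smul_left] at hB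
  have h4 := tp zs zp z
  have h5 := tp zs zp w
  rw [inner_sub_left] at h4 h5
  have h5' : (μ / L) * (⟪Dd zp, zs - zp⟫ - ⟪Dd w, zs - zp⟫) =
      (μ / L) * (V zs w - V zp w - V zs zp) := by rw [h5]
  have hB' : 0 ≤ (1 / L) * ⟪g w, zs - zp⟫ + (V zs z - V zp z - V zs zp) +
      (μ / L) * (V zs w - V zp w - V zs zp) := by
    ring_nf at hB h5' ⊢
    linarith
  have hB2 : 0 ≤ ⟪g w, zs - zp⟫ + L * (V zs z - V zp z - V zs zp) +
      μ * (V zs w - V zp w - V zs zp) := by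
    have h := mul_nonneg hL.le hB'
    have e : L * ((1 / L) * ⟪g w, zs - zp⟫ + (V zs z - V zp z - V zs zp) +
        (μ / L) * (V zs w - V zp w - V zs zp)) =
        ⟪g w, zs - zp⟫ + L * (V zs z - V zp z - V zs zp) +
        μ * (V zs w - V zp w - V zs zp) := by
      field_simp
    rw [e] at h
    exact h
  have hMl := minty_bound hXconv hd hV hμ hmono hzs hMinty hVnn hwX
  have i1 : ⟪g z, zp - w⟫ = ⟪g z - g w, zp - w⟫ + ⟪g w, zp - w⟫ := by
    rw [inner_sub_left]; ring
  have i2 : ⟪g w, zs - zp⟫ = - ⟪g w, w - zs⟫ - ⟪g w, zp - w⟫ := by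
    have he : zs - zp = -(w - zs) + -(zp - w) := by module
    rw [he, inner_add_right, inner_neg_right, inner_neg_right]
    ring
  have hzpw := mul_nonneg hμ.le (hVnn zp w)
  have hfinal : (L + μ) * V zs zp ≤ L * V zs z + δ := by linarith
  have hLμ : (0:ℝ) < L + μ := by linarith
  have e2 : (1 + μ / L)⁻¹ * V zs z + δ / (L + μ) = (L * V zs z + δ) / (L + μ) := by
    have h1 : (1 + μ / L) = (L + μ) / L := by field_simp
    rw [h1, inv_div]
    field_simp
  rw [e2, le_div_iff₀ hLμ]
  nlinarith [hfinal]
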